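/- Fix β > 0 and an integer N_s ≥ 1. For each N_h let N = N_s·N_h, K = ⌊βN⌋, and let S be an N×K TH matrix whose columns are i.i.d. (N_s,N_h)-sequences. Then for every ε > 0, P( rank(S)/N > min{β, 1 − e^{−N_s β}} + ε ) → 0 as N_h → ∞; moreover rank(S)/N ≤ min{1, K/N} holds surely. -/

import Mathlib

/-- A realization of an `(N_s, N_h)`-sequence, encoded by `f : Fin N_s → Fin N_h × Bool`:
the `N = N_s·N_h` coordinates are indexed by (block, slot) pairs, and in block `m` the
unique nonzero entry sits in slot `(f m).1` with value `±1/√N_s` according to the sign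
`(f m).2`.  Averaging uniformly over all `f` gives the uniform random `(N_s,N_h)`-sequence. -/
noncomputable def thSeq {Ns Nh : ℕ} (f : Fin Ns → Fin Nh × Bool) :
    Fin Ns × Fin Nh → ℝ :=
  fun p => if (f p.1).1 = p.2 then
    (if (f p.1).2 then 1 else -1) / Real.sqrt (Ns : ℝ) else 0

/-- A realization of an `N×K` TH matrix with parameter `N_s` (rows indexed by
(block, slot) pairs, `N = N_s·N_h`), whose columns are `(N_s,N_h)`-sequences. -/
noncomputable def thMatrixNs {Ns Nh K : ℕ} (ω : Fin K → Fin Ns → Fin Nh × Bool) :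
    Matrix (Fin Ns × Fin Nh) (Fin K) ℝ :=
  fun p k => thSeq (ω k) p

open Finset

private lemma sum_pi_one {ι α : Type*} [Fintype ι] [DecidableEq ι] [Fintype α]
    (f : α → ℝ) (i : ι) :
    ∑ g : ι → α, f (g i)
      = (∑ x, f x) * (Fintype.card α : ℝ) ^ (Fintype.card ι - 1) := by
  have key : ∀ g : ι → α, f (g i) = ∏ j, (if j = i then f (g j) else 1) := by
    intro g
    rw [Finset.prod_ite_eq' Finset.univ i fun j => f (g j)]
    simp
  rw [Finset.sum_congr rfl fun g _ => key g, ← Fintype.prod_sum fun j x => if j = i then f x else 1]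
  have hval : ∀ j : ι, (∑ x, if j = i then f x else (1:ℝ))
      = (if j = i then (∑ x, f x) else (Fintype.card α : ℝ)) := by
    intro j; split_ifs <;> simp [Finset.card_univ]
  rw [Finset.prod_congr rfl fun j _ => hval j,
    ← Finset.mul_prod_erase Finset.univ _ (Finset.mem_univ i), if_pos rfl]
  congr 1
  rw [Finset.prod_congr rfl fun j hj => if_neg (Finset.mem_erase.mp hj).1,
    Finset.prod_const, Finset.card_erase_of_mem (Finset.mem_univ i), Finset.card_univ]

private lemma sum_pi_two {ι α : Type*} [Fintype ι] [DecidableEq ι] [Fintype α]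
    (f g : α → ℝ) {i j : ι} (hij : i ≠ j) :
    ∑ p : ι → α, f (p i) * g (p j)
      = (∑ x, f x) * (∑ x, g x) * (Fintype.card α : ℝ) ^ (Fintype.card ι - 2) := by
  have hji : j ∈ Finset.univ.erase i :=
    Finset.mem_erase.mpr ⟨fun h => hij h.symm, Finset.mem_univ j⟩
  have key : ∀ p : ι → α, f (p i) * g (p j)
      = ∏ k, (if k = i then f (p k) else if k = j then g (p k) else 1) := by
    intro p
    rw [← Finset.mul_prod_erase Finset.univ _ (Finset.mem_univ i), if_pos rfl,
      ← Finset.mul_prod_erase _ _ hji, if_neg (Finset.mem_erase.mp hji).1, if_pos rfl]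
    have h1 : ∀ k ∈ (Finset.univ.erase i).erase j,
        (if k = i then f (p k) else if k = j then g (p k) else (1:ℝ)) = 1 := by
      intro k hk
      have hk1 := Finset.mem_erase.mp hk
      have hk2 := Finset.mem_erase.mp hk1.2
      rw [if_neg hk2.1, if_neg hk1.1]
    rw [Finset.prod_congr rfl h1, Finset.prod_const_one, mul_one]
  rw [Finset.sum_congr rfl fun p _ => key p,
    ← Fintype.prod_sum fun k x => if k = i then f x else if k = j then g x else 1]
  have hval : ∀ k : ι, (∑ x, if k = i then f x else if k = j then g x else (1:ℝ))
      = (if k = i then (∑ x, f x) else if k = j then (∑ x, g x) else (Fintype.card α : ℝ)) := by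
    intro k; split_ifs <;> simp [Finset.card_univ]
  rw [Finset.prod_congr rfl fun k _ => hval k,
    ← Finset.mul_prod_erase Finset.univ _ (Finset.mem_univ i), if_pos rfl,
    ← Finset.mul_prod_erase _ _ hji, if_neg (Finset.mem_erase.mp hji).1, if_pos rfl]
  have h1 : ∀ k ∈ (Finset.univ.erase i).erase j,
      (if k = i then (∑ x, f x) else if k = j then (∑ x, g x) else (Fintype.card α : ℝ))
        = (Fintype.card α : ℝ) := by
    intro k hk
    have hk1 := Finset.mem_erase.mp hk
    have hk2 := Finset.mem_erase.mp hk1.2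
    rw [if_neg hk2.1, if_neg hk1.1]
  rw [Finset.prod_congr rfl h1, Finset.prod_const, Finset.card_erase_of_mem hji,
    Finset.card_erase_of_mem (Finset.mem_univ i), Finset.card_univ]
  have h2 : Fintype.card ι - 1 - 1 = Fintype.card ι - 2 := by omega
  rw [h2, mul_assoc]

private lemma rank_le_card_filter {m n : Type*} [Fintype m] [Fintype n]
    (A : Matrix m n ℝ) (P : m → Prop) [DecidablePred P] (hP : ∀ i, ¬ P i → A i = 0) :
    (A.rank : ℕ) ≤ (Finset.univ.filter P).card := by
  classical
  rw [Matrix.rank_eq_finrank_span_row]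
  set s : Finset (n → ℝ) := (Finset.univ.filter P).image A with hs
  have h1 : Submodule.span ℝ (Set.range A) ≤ Submodule.span ℝ (s : Set (n → ℝ)) := by
    rw [Submodule.span_le]
    rintro _ ⟨i, rfl⟩
    by_cases hi : P i
    · exact Submodule.subset_span (Finset.mem_coe.mpr (Finset.mem_image.mpr
        ⟨i, Finset.mem_filter.mpr ⟨Finset.mem_univ i, hi⟩, rfl⟩))
    · rw [hP i hi]; exact Submodule.zero_mem _
  calc Module.finrank ℝ (Submodule.span ℝ (Set.range A))
      ≤ Module.finrank ℝ (Submodule.span ℝ (s : Set (n → ℝ))) := Submodule.finrank_mono h1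
    _ ≤ s.card := finrank_span_finset_le_card s
    _ ≤ (Finset.univ.filter P).card := Finset.card_image_le

namespace THaux

variable {Ns Nh K : ℕ}

noncomputable def tU (m : Fin Ns) (h : Fin Nh) (a : Fin Ns → Fin Nh × Bool) : ℝ :=
  if (a m).1 = h then 0 else 1

noncomputable def Uind (p : Fin Ns × Fin Nh) (ω : Fin K → Fin Ns → Fin Nh × Bool) : ℝ :=
  ∏ k, tU p.1 p.2 (ω k)

noncomputable def Occ (ω : Fin K → Fin Ns → Fin Nh × Bool) : ℝ :=
  ∑ p : Fin Ns × Fin Nh, (1 - Uind p ω)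

lemma tU_nonneg (m : Fin Ns) (h : Fin Nh) (a : Fin Ns → Fin Nh × Bool) :
    0 ≤ tU m h a := by
  unfold tU; split_ifs <;> norm_num

lemma Uind_eq (p : Fin Ns × Fin Nh) (ω : Fin K → Fin Ns → Fin Nh × Bool) :
    Uind p ω = if ∀ k, (ω k p.1).1 ≠ p.2 then 1 else 0 := by
  unfold Uind tU
  split_ifs with hall
  · exact Finset.prod_eq_one fun k _ => if_neg (hall k)
  · push_neg at hall
    obtain ⟨k, hk⟩ := hall
    exact Finset.prod_eq_zero (Finset.mem_univ k) (if_pos hk)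

lemma Uind_idem (p : Fin Ns × Fin Nh) (ω : Fin K → Fin Ns → Fin Nh × Bool) :
    Uind p ω * Uind p ω = Uind p ω := by
  rw [Uind_eq]; split_ifs <;> norm_num

lemma Uind_nonneg (p : Fin Ns × Fin Nh) (ω : Fin K → Fin Ns → Fin Nh × Bool) :
    0 ≤ Uind p ω := by
  rw [Uind_eq]; split_ifs <;> norm_num

lemma Uind_le_one (p : Fin Ns × Fin Nh) (ω : Fin K → Fin Ns → Fin Nh × Bool) :
    Uind p ω ≤ 1 := by
  rw [Uind_eq]; split_ifs <;> norm_num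

lemma card_X : (Fintype.card (Fin Nh × Bool) : ℝ) = 2 * (Nh : ℝ) := by
  simp [Fintype.card_prod]; ring

lemma sum_ite_fin (h : Fin Nh) :
    ∑ v : Fin Nh, (if v = h then (0:ℝ) else 1) = (Nh : ℝ) - 1 := by
  have key : ∀ v : Fin Nh, (if v = h then (0:ℝ) else 1)
      = 1 - (if v = h then (1:ℝ) else 0) := by
    intro v; split_ifs <;> ring
  rw [Finset.sum_congr rfl fun v _ => key v, Finset.sum_sub_distrib,
    Finset.sum_const, Finset.card_univ, Fintype.card_fin,
    Finset.sum_ite_eq' Finset.univ h fun _ => (1:ℝ), if_pos (Finset.mem_univ h)]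
  simp

lemma sum_ite_fin2 {h h' : Fin Nh} (hne : h ≠ h') :
    ∑ v : Fin Nh, ((if v = h then (0:ℝ) else 1) * (if v = h' then (0:ℝ) else 1))
      = (Nh : ℝ) - 2 := by
  have key : ∀ v : Fin Nh, ((if v = h then (0:ℝ) else 1) * (if v = h' then (0:ℝ) else 1))
      = 1 - (if v = h then (1:ℝ) else 0) - (if v = h' then (1:ℝ) else 0) := by
    intro v
    by_cases h1 : v = h <;> by_cases h2 : v = h'
    · exact absurd (h1 ▸ h2) hne
    all_goals simp [h1, h2, hne, Ne.symm hne]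
  rw [Finset.sum_congr rfl fun v _ => key v, Finset.sum_sub_distrib, Finset.sum_sub_distrib,
    Finset.sum_const, Finset.card_univ, Fintype.card_fin,
    Finset.sum_ite_eq' Finset.univ h fun _ => (1:ℝ), if_pos (Finset.mem_univ h),
    Finset.sum_ite_eq' Finset.univ h' fun _ => (1:ℝ), if_pos (Finset.mem_univ h')]
  ring

lemma sum_tU (m : Fin Ns) (h : Fin Nh) :
    ∑ a : Fin Ns → Fin Nh × Bool, tU m h a
      = (2 * ((Nh:ℝ) - 1)) * (2 * (Nh:ℝ)) ^ (Ns - 1) := by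
  have main := sum_pi_one (fun x : Fin Nh × Bool => if x.1 = h then (0:ℝ) else 1) m
  rw [Fintype.card_fin, card_X] at main
  have hx : (∑ x : Fin Nh × Bool, if x.1 = h then (0:ℝ) else 1) = 2 * ((Nh:ℝ) - 1) := by
    rw [Fintype.sum_prod_type]
    have : ∀ v : Fin Nh, (∑ _b : Bool, if v = h then (0:ℝ) else 1)
        = 2 * (if v = h then (0:ℝ) else 1) := by intro v; split_ifs <;> simp
    rw [Finset.sum_congr rfl fun v _ => this v, ← Finset.mul_sum, sum_ite_fin]
  rw [hx] at main
  exact main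

lemma sum_Uind (p : Fin Ns × Fin Nh) :
    ∑ ω : Fin K → Fin Ns → Fin Nh × Bool, Uind p ω
      = ((2 * ((Nh:ℝ) - 1)) * (2 * (Nh:ℝ)) ^ (Ns - 1)) ^ K := by
  rw [← sum_tU p.1 p.2, Fintype.sum_pow]
  rfl

lemma card_Om : (Fintype.card (Fin K → Fin Ns → Fin Nh × Bool) : ℝ)
    = ((2 * (Nh:ℝ)) ^ Ns) ^ K := by
  simp only [Fintype.card_fun, Fintype.card_prod, Fintype.card_fin, Fintype.card_bool]
  push_cast
  ring

lemma sum_tUtU_same (m : Fin Ns) {h h' : Fin Nh} (hne : h ≠ h') :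
    ∑ a : Fin Ns → Fin Nh × Bool, tU m h a * tU m h' a
      = (2 * ((Nh:ℝ) - 2)) * (2 * (Nh:ℝ)) ^ (Ns - 1) := by
  have main := sum_pi_one
    (fun x : Fin Nh × Bool => (if x.1 = h then (0:ℝ) else 1) * (if x.1 = h' then (0:ℝ) else 1)) m
  rw [Fintype.card_fin, card_X] at main
  have hx : (∑ x : Fin Nh × Bool,
      (if x.1 = h then (0:ℝ) else 1) * (if x.1 = h' then (0:ℝ) else 1)) = 2 * ((Nh:ℝ) - 2) := by
    rw [Fintype.sum_prod_type]
    have : ∀ v : Fin Nh, (∑ _b : Bool, (if v = h then (0:ℝ) else 1) * (if v = h' then (0:ℝ) else 1))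
        = 2 * ((if v = h then (0:ℝ) else 1) * (if v = h' then (0:ℝ) else 1)) := by
      intro v; split_ifs <;> simp
    rw [Finset.sum_congr rfl fun v _ => this v, ← Finset.mul_sum, sum_ite_fin2 hne]
  rw [hx] at main
  exact main

lemma sum_tUtU_diff {m m' : Fin Ns} (hne : m ≠ m') (h h' : Fin Nh) :
    ∑ a : Fin Ns → Fin Nh × Bool, tU m h a * tU m' h' a
      = (2 * ((Nh:ℝ) - 1)) * (2 * ((Nh:ℝ) - 1)) * (2 * (Nh:ℝ)) ^ (Ns - 2) := by
  have main := sum_pi_two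
    (fun x : Fin Nh × Bool => if x.1 = h then (0:ℝ) else 1)
    (fun x : Fin Nh × Bool => if x.1 = h' then (0:ℝ) else 1) hne
  rw [Fintype.card_fin, card_X] at main
  have hx : (∑ x : Fin Nh × Bool, if x.1 = h then (0:ℝ) else 1) = 2 * ((Nh:ℝ) - 1) := by
    rw [Fintype.sum_prod_type]
    have : ∀ v : Fin Nh, (∑ _b : Bool, if v = h then (0:ℝ) else 1)
        = 2 * (if v = h then (0:ℝ) else 1) := by intro v; split_ifs <;> simp
    rw [Finset.sum_congr rfl fun v _ => this v, ← Finset.mul_sum, sum_ite_fin]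
  have hx' : (∑ x : Fin Nh × Bool, if x.1 = h' then (0:ℝ) else 1) = 2 * ((Nh:ℝ) - 1) := by
    rw [Fintype.sum_prod_type]
    have : ∀ v : Fin Nh, (∑ _b : Bool, if v = h' then (0:ℝ) else 1)
        = 2 * (if v = h' then (0:ℝ) else 1) := by intro v; split_ifs <;> simp
    rw [Finset.sum_congr rfl fun v _ => this v, ← Finset.mul_sum, sum_ite_fin]
  rw [hx, hx'] at main
  exact main

lemma sum_UU_le {p q : Fin Ns × Fin Nh} (hpq : p ≠ q) :
    (Fintype.card (Fin K → Fin Ns → Fin Nh × Bool) : ℝ) *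
        ∑ ω : Fin K → Fin Ns → Fin Nh × Bool, Uind p ω * Uind q ω
      ≤ (∑ ω : Fin K → Fin Ns → Fin Nh × Bool, Uind p ω) *
          (∑ ω : Fin K → Fin Ns → Fin Nh × Bool, Uind q ω) := by
  have hNs1 : 1 ≤ Ns := by
    have : Nonempty (Fin Ns) := ⟨p.1⟩
    exact Nat.one_le_iff_ne_zero.mpr (by rintro rfl; exact (Fin.elim0 p.1))
  set n : ℝ := (Nh : ℝ) with hn
  have hn0 : 0 ≤ n := Nat.cast_nonneg Nh
  -- rewrite the product of indicators as a single pi-product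
  have hprod : ∀ ω : Fin K → Fin Ns → Fin Nh × Bool,
      Uind p ω * Uind q ω = ∏ k, (tU p.1 p.2 (ω k) * tU q.1 q.2 (ω k)) := by
    intro ω; rw [Finset.prod_mul_distrib]; rfl
  have hsum : ∑ ω : Fin K → Fin Ns → Fin Nh × Bool, Uind p ω * Uind q ω
      = (∑ a : Fin Ns → Fin Nh × Bool, tU p.1 p.2 a * tU q.1 q.2 a) ^ K := by
    rw [Finset.sum_congr rfl fun ω _ => hprod ω]
    exact (Fintype.sum_pow (fun a => tU p.1 p.2 a * tU q.1 q.2 a) K).symm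
  have hT0 : 0 ≤ ∑ a : Fin Ns → Fin Nh × Bool, tU p.1 p.2 a * tU q.1 q.2 a :=
    Finset.sum_nonneg fun a _ => mul_nonneg (tU_nonneg _ _ _) (tU_nonneg _ _ _)
  rw [hsum, sum_Uind, sum_Uind, card_Om, ← mul_pow, ← mul_pow]
  apply pow_le_pow_left₀ (mul_nonneg (by positivity) hT0)
  -- key base-level inequality
  obtain ⟨m, h⟩ := p
  obtain ⟨m', h'⟩ := q
  by_cases hmm : m = m'
  · subst hmm
    have hne : h ≠ h' := by
      intro hh; exact hpq (by simp [hh])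
    rw [sum_tUtU_same m hne, ← hn]
    have hsplit : (2 * n) ^ Ns = (2 * n) ^ (Ns - 1) * (2 * n) := by
      rw [← pow_succ]
      congr 1
      omega
    rw [hsplit]
    have hP : (0:ℝ) ≤ (2 * n) ^ (Ns - 1) := by positivity
    have hcore : (2 * n) * (2 * (n - 2)) ≤ (2 * (n - 1)) * (2 * (n - 1)) := by nlinarith
    nlinarith [mul_le_mul_of_nonneg_left hcore (mul_nonneg hP hP)]
  · rw [sum_tUtU_diff hmm h h', ← hn]
    refine le_of_eq ?_
    have hNs2 : 2 ≤ Ns := by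
      rcases Ns with _ | _ | Ns
      · exact absurd m.2 (by omega)
      · have h1 := m.2
        have h2 := m'.2
        exact absurd (Fin.ext (by omega : m.1 = m'.1)) hmm
      · omega
    have hsplit : (2 * n) ^ Ns * (2 * n) ^ (Ns - 2)
        = (2 * n) ^ (Ns - 1) * (2 * n) ^ (Ns - 1) := by
      rw [← pow_add, ← pow_add]
      congr 1
      omega
    calc (2 * n) ^ Ns * ((2 * (n - 1)) * (2 * (n - 1)) * (2 * n) ^ (Ns - 2))
        = ((2 * n) ^ Ns * (2 * n) ^ (Ns - 2)) * ((2 * (n - 1)) * (2 * (n - 1))) := by ring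
      _ = ((2 * n) ^ (Ns - 1) * (2 * n) ^ (Ns - 1)) * ((2 * (n - 1)) * (2 * (n - 1))) := by
          rw [hsplit]
      _ = 2 * (n - 1) * (2 * n) ^ (Ns - 1) * (2 * (n - 1) * (2 * n) ^ (Ns - 1)) := by ring

lemma sum_Uind_nonneg (p : Fin Ns × Fin Nh) :
    0 ≤ ∑ ω : Fin K → Fin Ns → Fin Nh × Bool, Uind p ω :=
  Finset.sum_nonneg fun ω _ => Uind_nonneg p ω

lemma sum_Uind_le (p : Fin Ns × Fin Nh) :
    ∑ ω : Fin K → Fin Ns → Fin Nh × Bool, Uind p ω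
      ≤ (Fintype.card (Fin K → Fin Ns → Fin Nh × Bool) : ℝ) := by
  calc ∑ ω : Fin K → Fin Ns → Fin Nh × Bool, Uind p ω
      ≤ ∑ _ω : Fin K → Fin Ns → Fin Nh × Bool, (1:ℝ) :=
        Finset.sum_le_sum fun ω _ => Uind_le_one p ω
    _ = _ := by rw [Finset.sum_const, Finset.card_univ, nsmul_eq_mul, mul_one]

lemma var_le (hNh : 1 ≤ Nh) :
    ∑ ω : Fin K → Fin Ns → Fin Nh × Bool,
        (Occ ω - (∑ ω' : Fin K → Fin Ns → Fin Nh × Bool, Occ ω') /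
          (Fintype.card (Fin K → Fin Ns → Fin Nh × Bool) : ℝ)) ^ 2
      ≤ ((Ns * Nh : ℕ) : ℝ) * (Fintype.card (Fin K → Fin Ns → Fin Nh × Bool) : ℝ) := by
  classical
  haveI : Nonempty (Fin Nh) := ⟨⟨0, hNh⟩⟩
  set cΩ := (Fintype.card (Fin K → Fin Ns → Fin Nh × Bool) : ℝ) with hcΩ
  have hc0 : 0 < cΩ := by rw [hcΩ]; exact_mod_cast Fintype.card_pos
  set SO := ∑ ω' : Fin K → Fin Ns → Fin Nh × Bool, Occ (Ns := Ns) (Nh := Nh) (K := K) ω' with hSO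
  set μ := SO / cΩ with hμ
  have hexp : ∑ ω : Fin K → Fin Ns → Fin Nh × Bool, (Occ ω - μ)^2
      = (∑ ω : Fin K → Fin Ns → Fin Nh × Bool, (Occ ω)^2) - SO * (2*μ) + cΩ * μ^2 := by
    have h1 : ∀ ω : Fin K → Fin Ns → Fin Nh × Bool,
        (Occ ω - μ)^2 = ((Occ ω)^2 - Occ ω * (2*μ)) + μ^2 := fun ω => by ring
    rw [Finset.sum_congr rfl fun ω _ => h1 ω, Finset.sum_add_distrib, Finset.sum_sub_distrib,
      ← Finset.sum_mul, Finset.sum_const, Finset.card_univ, nsmul_eq_mul, ← hcΩ, ← hSO]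
  have hkey : cΩ * ∑ ω : Fin K → Fin Ns → Fin Nh × Bool, (Occ ω - μ)^2
      = cΩ * (∑ ω : Fin K → Fin Ns → Fin Nh × Bool, (Occ ω)^2) - SO^2 := by
    rw [hexp, hμ]; field_simp; ring
  have hOcc2 : ∑ ω : Fin K → Fin Ns → Fin Nh × Bool, (Occ ω)^2
      = ∑ p : Fin Ns × Fin Nh, ∑ q : Fin Ns × Fin Nh,
          ∑ ω : Fin K → Fin Ns → Fin Nh × Bool, (1 - Uind p ω) * (1 - Uind q ω) := by
    have h1 : ∀ ω : Fin K → Fin Ns → Fin Nh × Bool,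
        (Occ ω)^2 = ∑ p : Fin Ns × Fin Nh, ∑ q : Fin Ns × Fin Nh,
          (1 - Uind p ω) * (1 - Uind q ω) := by
      intro ω; rw [sq]; exact Finset.sum_mul_sum _ _ _ _
    rw [Finset.sum_congr rfl fun ω _ => h1 ω, Finset.sum_comm]
    exact Finset.sum_congr rfl fun p _ => Finset.sum_comm
  have hSO2 : SO = ∑ p : Fin Ns × Fin Nh,
      (cΩ - ∑ ω : Fin K → Fin Ns → Fin Nh × Bool, Uind p ω) := by
    rw [hSO]
    unfold Occ
    rw [Finset.sum_comm]
    refine Finset.sum_congr rfl fun p _ => ?_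
    rw [Finset.sum_sub_distrib, Finset.sum_const, Finset.card_univ, nsmul_eq_mul, mul_one, ← hcΩ]
  have hpair : ∀ p q : Fin Ns × Fin Nh,
      cΩ * (∑ ω : Fin K → Fin Ns → Fin Nh × Bool, (1 - Uind p ω) * (1 - Uind q ω))
        - (cΩ - ∑ ω : Fin K → Fin Ns → Fin Nh × Bool, Uind p ω)
          * (cΩ - ∑ ω : Fin K → Fin Ns → Fin Nh × Bool, Uind q ω)
      ≤ (if p = q then cΩ^2 else 0) := by
    intro p q
    by_cases hpq : p = q
    · subst hpq
      rw [if_pos rfl]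
      have h1 : ∀ ω : Fin K → Fin Ns → Fin Nh × Bool,
          (1 - Uind p ω) * (1 - Uind p ω) = 1 - Uind p ω := by
        intro ω
        have h := Uind_idem p ω
        linear_combination h
      rw [Finset.sum_congr rfl fun ω _ => h1 ω, Finset.sum_sub_distrib, Finset.sum_const,
        Finset.card_univ, nsmul_eq_mul, mul_one, ← hcΩ]
      have h0 : 0 ≤ ∑ ω : Fin K → Fin Ns → Fin Nh × Bool, Uind p ω := sum_Uind_nonneg p
      have h1' : ∑ ω : Fin K → Fin Ns → Fin Nh × Bool, Uind p ω ≤ cΩ := sum_Uind_le p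
      nlinarith
    · rw [if_neg hpq]
      have hexpand : ∑ ω : Fin K → Fin Ns → Fin Nh × Bool, (1 - Uind p ω) * (1 - Uind q ω)
          = cΩ - (∑ ω : Fin K → Fin Ns → Fin Nh × Bool, Uind p ω)
              - (∑ ω : Fin K → Fin Ns → Fin Nh × Bool, Uind q ω)
              + ∑ ω : Fin K → Fin Ns → Fin Nh × Bool, Uind p ω * Uind q ω := by
        have h1 : ∀ ω : Fin K → Fin Ns → Fin Nh × Bool,
            (1 - Uind p ω) * (1 - Uind q ω)
              = ((1 - Uind p ω) - Uind q ω) + Uind p ω * Uind q ω := fun ω => by ring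
        rw [Finset.sum_congr rfl fun ω _ => h1 ω, Finset.sum_add_distrib,
          Finset.sum_sub_distrib, Finset.sum_sub_distrib, Finset.sum_const,
          Finset.card_univ, nsmul_eq_mul, mul_one, ← hcΩ]
      have hUU := sum_UU_le (K := K) hpq
      rw [← hcΩ] at hUU
      rw [hexpand]
      nlinarith [hUU]
  have hN : ∑ p : Fin Ns × Fin Nh, ∑ q : Fin Ns × Fin Nh, (if p = q then cΩ^2 else 0)
      = ((Ns * Nh : ℕ) : ℝ) * cΩ^2 := by
    have h1 : ∀ p : Fin Ns × Fin Nh,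
        (∑ q : Fin Ns × Fin Nh, if p = q then cΩ^2 else 0) = cΩ^2 := by
      intro p
      rw [Finset.sum_ite_eq Finset.univ p fun _ => cΩ^2, if_pos (Finset.mem_univ p)]
    rw [Finset.sum_congr rfl fun p _ => h1 p, Finset.sum_const, Finset.card_univ]
    simp only [Fintype.card_prod, Fintype.card_fin, nsmul_eq_mul]
    try push_cast
    try ring
  have hchain : cΩ * ∑ ω : Fin K → Fin Ns → Fin Nh × Bool, (Occ ω - μ)^2
      ≤ ((Ns * Nh : ℕ) : ℝ) * cΩ^2 := by
    rw [hkey, hOcc2, hSO2, Finset.mul_sum, sq, Finset.sum_mul_sum, ← hN,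
      ← Finset.sum_sub_distrib]
    refine Finset.sum_le_sum fun p _ => ?_
    rw [Finset.mul_sum, ← Finset.sum_sub_distrib]
    exact Finset.sum_le_sum fun q _ => hpair p q
  have : ∑ ω : Fin K → Fin Ns → Fin Nh × Bool, (Occ ω - μ)^2
      ≤ ((Ns * Nh : ℕ) : ℝ) * cΩ := by
    have h2 : cΩ * (((Ns * Nh : ℕ) : ℝ) * cΩ) = ((Ns * Nh : ℕ) : ℝ) * cΩ^2 := by ring
    exact le_of_mul_le_mul_left (by rw [h2]; exact hchain) hc0
  exact this

lemma Occ_eq_card (ω : Fin K → Fin Ns → Fin Nh × Bool) [DecidableEq (Fin Nh)] :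
    Occ ω = ((Finset.univ.filter
      (fun p : Fin Ns × Fin Nh => ∃ k, (ω k p.1).1 = p.2)).card : ℝ) := by
  classical
  unfold Occ
  have h1 : ∀ p : Fin Ns × Fin Nh, 1 - Uind p ω
      = if ∃ k, (ω k p.1).1 = p.2 then (1:ℝ) else 0 := by
    intro p
    rw [Uind_eq]
    by_cases hp : ∃ k, (ω k p.1).1 = p.2
    · have hne : ¬ (∀ k, (ω k p.1).1 ≠ p.2) := by push_neg; exact hp
      rw [if_pos hp, if_neg hne]
      try ring
    · have hal : ∀ k, (ω k p.1).1 ≠ p.2 := by push_neg at hp; exact hp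
      rw [if_neg hp, if_pos hal]
      try ring
  rw [Finset.sum_congr rfl fun p _ => h1 p, Finset.sum_boole]

lemma rank_le_Occ (ω : Fin K → Fin Ns → Fin Nh × Bool) :
    ((thMatrixNs ω).rank : ℝ) ≤ Occ ω := by
  classical
  have hzero : ∀ p : Fin Ns × Fin Nh, ¬ (∃ k, (ω k p.1).1 = p.2) → thMatrixNs ω p = 0 := by
    intro p hp
    funext k
    push_neg at hp
    show thSeq (ω k) p = 0
    unfold thSeq
    rw [if_neg (hp k)]
    try rfl
  have hrank := rank_le_card_filter (thMatrixNs ω)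
    (fun p : Fin Ns × Fin Nh => ∃ k, (ω k p.1).1 = p.2) hzero
  rw [Occ_eq_card]
  exact_mod_cast hrank

lemma sum_Occ :
    ∑ ω : Fin K → Fin Ns → Fin Nh × Bool, Occ ω
      = ((Ns * Nh : ℕ) : ℝ) * ((Fintype.card (Fin K → Fin Ns → Fin Nh × Bool) : ℝ)
          - ((2 * ((Nh:ℝ) - 1)) * (2 * (Nh:ℝ)) ^ (Ns - 1)) ^ K) := by
  unfold Occ
  rw [Finset.sum_comm]
  have h1 : ∀ p : Fin Ns × Fin Nh,
      ∑ ω : Fin K → Fin Ns → Fin Nh × Bool, (1 - Uind p ω)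
        = (Fintype.card (Fin K → Fin Ns → Fin Nh × Bool) : ℝ)
            - ((2 * ((Nh:ℝ) - 1)) * (2 * (Nh:ℝ)) ^ (Ns - 1)) ^ K := by
    intro p
    rw [Finset.sum_sub_distrib, Finset.sum_const, Finset.card_univ, nsmul_eq_mul, mul_one,
      sum_Uind]
  rw [Finset.sum_congr rfl fun p _ => h1 p, Finset.sum_const, Finset.card_univ,
    Fintype.card_prod, Fintype.card_fin, Fintype.card_fin, nsmul_eq_mul]
  try push_cast
  try ring

lemma ratio_q (hNh : 1 ≤ Nh) (hNs : 1 ≤ Ns) :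
    ((2 * ((Nh:ℝ) - 1)) * (2 * (Nh:ℝ)) ^ (Ns - 1)) ^ K / ((2 * (Nh:ℝ)) ^ Ns) ^ K
      = (((Nh:ℝ) - 1) / (Nh:ℝ)) ^ K := by
  rw [← div_pow]
  congr 1
  have hn0 : (Nh:ℝ) ≠ 0 := by positivity
  have hsplit : (2 * (Nh:ℝ)) ^ Ns = (2 * (Nh:ℝ)) ^ (Ns - 1) * (2 * (Nh:ℝ)) := by
    rw [← pow_succ]; congr 1; omega
  have hp0 : (2 * (Nh:ℝ)) ^ (Ns - 1) ≠ 0 := by positivity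
  rw [hsplit]
  field_simp

end THaux


private lemma cheb_count {Ω : Type*} [Fintype Ω] (f : Ω → ℝ) (μ t B : ℝ) (ht : 0 ≤ t)
    (hvar : ∑ ω : Ω, (f ω - μ)^2 ≤ B) [DecidablePred fun ω : Ω => μ + t ≤ f ω] :
    ((Finset.univ.filter fun ω : Ω => μ + t ≤ f ω).card : ℝ) * t^2 ≤ B := by
  classical
  calc ((Finset.univ.filter fun ω : Ω => μ + t ≤ f ω).card : ℝ) * t^2
      = ∑ _ω ∈ Finset.univ.filter fun ω : Ω => μ + t ≤ f ω, t^2 := by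
        rw [Finset.sum_const, nsmul_eq_mul]
    _ ≤ ∑ ω ∈ Finset.univ.filter fun ω : Ω => μ + t ≤ f ω, (f ω - μ)^2 := by
        refine Finset.sum_le_sum fun ω hω => ?_
        have h1 := (Finset.mem_filter.mp hω).2
        have h2 : t ≤ f ω - μ := by linarith
        exact pow_le_pow_left₀ ht h2 2
    _ ≤ ∑ ω : Ω, (f ω - μ)^2 :=
        Finset.sum_le_sum_of_subset_of_nonneg (Finset.filter_subset _ _)
          fun ω _ _ => sq_nonneg _
    _ ≤ B := hvar


private lemma count_le (β ε : ℝ) (hβ : 0 < β) (hε : 0 < ε) (Ns Nh : ℕ)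
    (hNs : 1 ≤ Ns) (hNh : 1 ≤ Nh)
    (hq : Real.exp (-(Ns : ℝ) * β) - ε/2
        ≤ (((Nh:ℝ) - 1) / (Nh:ℝ)) ^ (⌊β * ((Ns * Nh : ℕ) : ℝ)⌋₊))
    (hmin : 1 - Real.exp (-(Ns : ℝ) * β) ≤ β) :
    ((Nat.card {ω : Fin ⌊β * ((Ns * Nh : ℕ) : ℝ)⌋₊ → Fin Ns → Fin Nh × Bool //
        min β (1 - Real.exp (-(Ns : ℝ) * β)) + ε <
          ((thMatrixNs ω).rank : ℝ) / ((Ns * Nh : ℕ) : ℝ)} : ℕ) : ℝ)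
      ≤ (Fintype.card (Fin ⌊β * ((Ns * Nh : ℕ) : ℝ)⌋₊ → Fin Ns → Fin Nh × Bool) : ℝ)
          * (4 / (((Ns * Nh : ℕ) : ℝ) * ε^2)) := by
  classical
  set K := ⌊β * ((Ns * Nh : ℕ) : ℝ)⌋₊ with hK
  set N : ℝ := ((Ns * Nh : ℕ) : ℝ) with hNdef
  have hN0 : 0 < N := by
    rw [hNdef]
    exact_mod_cast Nat.mul_pos hNs hNh
  haveI : Nonempty (Fin Nh) := ⟨⟨0, hNh⟩⟩
  set cΩ := (Fintype.card (Fin K → Fin Ns → Fin Nh × Bool) : ℝ) with hcΩ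
  have hc0 : 0 < cΩ := by
    rw [hcΩ]
    exact_mod_cast Fintype.card_pos
  set SO := ∑ ω : Fin K → Fin Ns → Fin Nh × Bool, THaux.Occ ω with hSO
  set μ := SO / cΩ with hμdef
  have hμval : μ = N * (1 - (((Nh:ℝ) - 1) / (Nh:ℝ)) ^ K) := by
    rw [hμdef, hSO, THaux.sum_Occ, ← hcΩ, ← hNdef]
    have h2 : ((2 * ((Nh:ℝ) - 1)) * (2 * (Nh:ℝ)) ^ (Ns - 1)) ^ K
        = (((Nh:ℝ) - 1) / (Nh:ℝ)) ^ K * cΩ := by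
      rw [hcΩ, THaux.card_Om, ← THaux.ratio_q (K := K) hNh hNs]
      have hden : ((2 * (Nh:ℝ)) ^ Ns) ^ K ≠ 0 := by positivity
      field_simp
    rw [h2]
    field_simp
  have hμle : μ + N * ε / 2 ≤ N * (min β (1 - Real.exp (-(Ns : ℝ) * β)) + ε) := by
    rw [min_eq_right hmin, hμval]
    nlinarith [mul_le_mul_of_nonneg_left hq hN0.le]
  have hcard : (Nat.card {ω : Fin K → Fin Ns → Fin Nh × Bool //
      min β (1 - Real.exp (-(Ns : ℝ) * β)) + ε < ((thMatrixNs ω).rank : ℝ) / N} : ℕ)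
      = (Finset.univ.filter fun ω : Fin K → Fin Ns → Fin Nh × Bool =>
          min β (1 - Real.exp (-(Ns : ℝ) * β)) + ε < ((thMatrixNs ω).rank : ℝ) / N).card := by
    rw [Nat.card_eq_fintype_card, Fintype.card_subtype]
  have hsub : (Finset.univ.filter fun ω : Fin K → Fin Ns → Fin Nh × Bool =>
        min β (1 - Real.exp (-(Ns : ℝ) * β)) + ε < ((thMatrixNs ω).rank : ℝ) / N)
      ⊆ (Finset.univ.filter fun ω : Fin K → Fin Ns → Fin Nh × Bool =>
          μ + N * ε / 2 ≤ THaux.Occ ω) := by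
    apply Finset.monotone_filter_right
    intro ω _ hω
    have hω' : (min β (1 - Real.exp (-(Ns : ℝ) * β)) + ε) * N < ((thMatrixNs ω).rank : ℝ) :=
      (lt_div_iff₀ hN0).mp hω
    have hro := THaux.rank_le_Occ ω
    nlinarith [hμle]
  have hvar := THaux.var_le (Ns := Ns) (Nh := Nh) (K := K) hNh
  have hcheb := cheb_count THaux.Occ μ (N * ε / 2) (N * cΩ)
    (by positivity) hvar
  have htpos : (0:ℝ) < (N * ε / 2)^2 := by positivity
  calc ((Nat.card {ω : Fin K → Fin Ns → Fin Nh × Bool //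
        min β (1 - Real.exp (-(Ns : ℝ) * β)) + ε < ((thMatrixNs ω).rank : ℝ) / N} : ℕ) : ℝ)
      = ((Finset.univ.filter fun ω : Fin K → Fin Ns → Fin Nh × Bool =>
          min β (1 - Real.exp (-(Ns : ℝ) * β)) + ε < ((thMatrixNs ω).rank : ℝ) / N).card : ℝ) := by
        rw [hcard]
    _ ≤ ((Finset.univ.filter fun ω : Fin K → Fin Ns → Fin Nh × Bool =>
          μ + N * ε / 2 ≤ THaux.Occ ω).card : ℝ) := by
        exact_mod_cast Finset.card_le_card hsub
    _ ≤ (N * cΩ) / (N * ε / 2)^2 := by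
        rw [le_div_iff₀ htpos]
        exact hcheb
    _ = cΩ * (4 / (N * ε^2)) := by
        field_simp
        ring

/-- Fix `β > 0` and an integer `N_s ≥ 1`.  For each `N_h` let
`N = N_s·N_h`, `K = ⌊βN⌋`, and let `S` be an `N×K` TH matrix with i.i.d.
`(N_s,N_h)`-sequence columns (probabilities computed by uniform counting over all
realizations).  Then for every `ε > 0`,
`P( rank(S)/N > min{β, 1 − e^{−N_s β}} + ε ) → 0` as `N_h → ∞`; moreover
`rank(S)/N ≤ min{1, K/N}` holds surely. -/
theorem rank_upper_bound_TH (β : ℝ) (hβ : 0 < β) (Ns : ℕ) (hNs : 1 ≤ Ns) :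
    (∀ ε : ℝ, 0 < ε →
      Filter.Tendsto
        (fun Nh : ℕ =>
          ((Nat.card {ω : Fin ⌊β * ((Ns * Nh : ℕ) : ℝ)⌋₊ → Fin Ns → Fin Nh × Bool //
              min β (1 - Real.exp (-(Ns : ℝ) * β)) + ε <
                ((thMatrixNs ω).rank : ℝ) / ((Ns * Nh : ℕ) : ℝ)} : ℕ) : ℝ) /
            (Fintype.card (Fin ⌊β * ((Ns * Nh : ℕ) : ℝ)⌋₊ → Fin Ns → Fin Nh × Bool) : ℝ))
        Filter.atTop (nhds 0)) ∧
    ∀ (Nh : ℕ) (ω : Fin ⌊β * ((Ns * Nh : ℕ) : ℝ)⌋₊ → Fin Ns → Fin Nh × Bool),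
      ((thMatrixNs ω).rank : ℝ) / ((Ns * Nh : ℕ) : ℝ) ≤
        min 1 ((⌊β * ((Ns * Nh : ℕ) : ℝ)⌋₊ : ℝ) / ((Ns * Nh : ℕ) : ℝ)) := by
  classical
  constructor
  · intro ε hε
    by_cases hcase : β ≤ 1 - Real.exp (-(Ns : ℝ) * β)
    · -- the event is always empty since rank/N ≤ β < β + ε
      have hzero : ∀ Nh : ℕ,
          ((Nat.card {ω : Fin ⌊β * ((Ns * Nh : ℕ) : ℝ)⌋₊ → Fin Ns → Fin Nh × Bool //
              min β (1 - Real.exp (-(Ns : ℝ) * β)) + ε <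
                ((thMatrixNs ω).rank : ℝ) / ((Ns * Nh : ℕ) : ℝ)} : ℕ) : ℝ) /
            (Fintype.card (Fin ⌊β * ((Ns * Nh : ℕ) : ℝ)⌋₊ → Fin Ns → Fin Nh × Bool) : ℝ)
            = 0 := by
        intro Nh
        have hempty : IsEmpty {ω : Fin ⌊β * ((Ns * Nh : ℕ) : ℝ)⌋₊ → Fin Ns → Fin Nh × Bool //
            min β (1 - Real.exp (-(Ns : ℝ) * β)) + ε <
              ((thMatrixNs ω).rank : ℝ) / ((Ns * Nh : ℕ) : ℝ)} := by
          constructor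
          rintro ⟨ω, hω⟩
          rw [min_eq_left hcase] at hω
          rcases Nat.eq_zero_or_pos Nh with h0 | hNh1
          · subst h0
            have hden : ((Ns * 0 : ℕ) : ℝ) = 0 := by norm_num
            have hle : ((thMatrixNs ω).rank : ℝ) / ((Ns * 0 : ℕ) : ℝ) = 0 :=
              div_eq_zero_iff.mpr (Or.inr hden)
            rw [hle] at hω
            linarith
          · have hN0 : (0:ℝ) < ((Ns * Nh : ℕ) : ℝ) := by
              exact_mod_cast Nat.mul_pos hNs hNh1
            have hr1 : ((thMatrixNs ω).rank : ℝ)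
                ≤ ((⌊β * ((Ns * Nh : ℕ) : ℝ)⌋₊ : ℕ) : ℝ) := by
              exact_mod_cast (thMatrixNs ω).rank_le_card_width.trans
                (Fintype.card_fin _).le
            have hr2 : ((⌊β * ((Ns * Nh : ℕ) : ℝ)⌋₊ : ℕ) : ℝ) ≤ β * ((Ns * Nh : ℕ) : ℝ) :=
              Nat.floor_le (by positivity)
            have hdiv : ((thMatrixNs ω).rank : ℝ) / ((Ns * Nh : ℕ) : ℝ) ≤ β := by
              rw [div_le_iff₀ hN0]
              linarith
            linarith
        rw [Nat.card_of_isEmpty]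
        norm_num
      exact Filter.Tendsto.congr (fun Nh => (hzero Nh).symm) tendsto_const_nhds
    · push_neg at hcase
      have hmin : 1 - Real.exp (-(Ns : ℝ) * β) ≤ β := hcase.le
      have hNs0 : 0 < Ns := hNs
      have hNat : Filter.Tendsto (fun Nh : ℕ => ((Ns * Nh : ℕ) : ℝ))
          Filter.atTop Filter.atTop := by
        apply tendsto_natCast_atTop_atTop.comp
        exact Filter.tendsto_atTop_mono (fun Nh => Nat.le_mul_of_pos_left Nh hNs0)
          Filter.tendsto_id
      have hbound : Filter.Tendsto (fun Nh : ℕ => 4 / (((Ns * Nh : ℕ) : ℝ) * ε^2))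
          Filter.atTop (nhds 0) :=
        Filter.Tendsto.div_atTop tendsto_const_nhds
          (Filter.Tendsto.atTop_mul_const (by positivity) hNat)
      refine tendsto_of_tendsto_of_tendsto_of_le_of_le' tendsto_const_nhds hbound
        (Filter.Eventually.of_forall fun Nh => by positivity) ?_
      have ev1 : ∀ᶠ Nh : ℕ in Filter.atTop, 2 ≤ Nh := Filter.eventually_ge_atTop 2
      have hd : Filter.Tendsto (fun Nh : ℕ => β * (Ns : ℝ) / ((Nh:ℝ) - 1))
          Filter.atTop (nhds 0) := by
        apply Filter.Tendsto.div_atTop tendsto_const_nhds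
        simpa [sub_eq_add_neg] using
          Filter.tendsto_atTop_add_const_right Filter.atTop (-1 : ℝ)
            tendsto_natCast_atTop_atTop
      have ev2 : ∀ᶠ Nh : ℕ in Filter.atTop, β * (Ns : ℝ) / ((Nh:ℝ) - 1) ≤ ε/2 :=
        hd.eventually (eventually_le_nhds (by positivity))
      filter_upwards [ev1, ev2] with Nh h2 hdle
      -- establish the floor-probability hypothesis hq
      have hn2 : (2:ℝ) ≤ (Nh:ℝ) := by exact_mod_cast h2
      have hn1 : (0:ℝ) < (Nh:ℝ) - 1 := by linarith
      have hn0 : (0:ℝ) < (Nh:ℝ) := by linarith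
      set K := ⌊β * ((Ns * Nh : ℕ) : ℝ)⌋₊ with hK
      have step1 : Real.exp (-(1/((Nh:ℝ)-1))) ≤ ((Nh:ℝ)-1)/(Nh:ℝ) := by
        have h := Real.add_one_le_exp (1/((Nh:ℝ)-1))
        have hfrac : (Nh:ℝ)/((Nh:ℝ)-1) = 1/((Nh:ℝ)-1) + 1 := by field_simp; ring
        have h2' : (Nh:ℝ)/((Nh:ℝ)-1) ≤ Real.exp (1/((Nh:ℝ)-1)) := by
          rw [hfrac]; exact h
        have hpos : (0:ℝ) < (Nh:ℝ)/((Nh:ℝ)-1) := by positivity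
        rw [Real.exp_neg]
        calc (Real.exp (1/((Nh:ℝ)-1)))⁻¹ ≤ ((Nh:ℝ)/((Nh:ℝ)-1))⁻¹ :=
              inv_anti₀ hpos h2'
          _ = ((Nh:ℝ)-1)/(Nh:ℝ) := by rw [inv_div]
      have step2 : Real.exp (-(1/((Nh:ℝ)-1))) ^ K ≤ (((Nh:ℝ)-1)/(Nh:ℝ)) ^ K :=
        pow_le_pow_left₀ (Real.exp_nonneg _) step1 K
      have step3 : Real.exp (-(1/((Nh:ℝ)-1))) ^ K = Real.exp (-((K:ℝ)/((Nh:ℝ)-1))) := by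
        rw [← Real.exp_nat_mul]
        congr 1
        ring
      have hKle : (K:ℝ) ≤ β * ((Ns:ℝ) * (Nh:ℝ)) := by
        have := Nat.floor_le (show (0:ℝ) ≤ β * ((Ns * Nh : ℕ) : ℝ) by positivity)
        rw [hK]
        push_cast at this ⊢
        linarith
      have step4 : Real.exp (-(Ns : ℝ) * β) - ε/2 ≤ Real.exp (-((K:ℝ)/((Nh:ℝ)-1))) := by
        set d := β * (Ns : ℝ) / ((Nh:ℝ)-1) with hd'
        have hd0 : 0 ≤ d := by positivity
        have harg : -(β*(Ns:ℝ)) - d ≤ -((K:ℝ)/((Nh:ℝ)-1)) := by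
          have hdivle : (K:ℝ)/((Nh:ℝ)-1) ≤ β * ((Ns:ℝ) * (Nh:ℝ))/((Nh:ℝ)-1) :=
            (div_le_div_iff_of_pos_right hn1).mpr hKle
          have heq : β * ((Ns:ℝ) * (Nh:ℝ))/((Nh:ℝ)-1) = β*(Ns:ℝ) + d := by
            rw [hd']; field_simp; ring
          linarith
        have hmono := Real.exp_le_exp.mpr harg
        have hsplit : Real.exp (-(β*(Ns:ℝ)) - d)
            = Real.exp (-(β*(Ns:ℝ))) * Real.exp (-d) := by
          rw [← Real.exp_add]; ring_nf
        have h1m : 1 - d ≤ Real.exp (-d) := by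
          have := Real.add_one_le_exp (-d); linarith
        have hexple : Real.exp (-(β*(Ns:ℝ))) ≤ 1 := by
          rw [Real.exp_le_one_iff]
          have hNsr : (0:ℝ) ≤ (Ns:ℝ) := Nat.cast_nonneg Ns
          nlinarith
        have hexppos := Real.exp_pos (-(β*(Ns:ℝ)))
        have hcongr : Real.exp (-(Ns : ℝ) * β) = Real.exp (-(β*(Ns:ℝ))) := by ring_nf
        rw [hcongr]
        nlinarith [mul_le_mul_of_nonneg_left h1m hexppos.le]
      have hq : Real.exp (-(Ns : ℝ) * β) - ε/2 ≤ (((Nh:ℝ) - 1) / (Nh:ℝ)) ^ K := by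
        calc Real.exp (-(Ns : ℝ) * β) - ε/2 ≤ Real.exp (-((K:ℝ)/((Nh:ℝ)-1))) := step4
          _ = Real.exp (-(1/((Nh:ℝ)-1))) ^ K := step3.symm
          _ ≤ (((Nh:ℝ) - 1) / (Nh:ℝ)) ^ K := step2
      have hfin := count_le β ε hβ hε Ns Nh hNs (by omega) hq hmin
      haveI : Nonempty (Fin Nh) := ⟨⟨0, by omega⟩⟩
      have hc0 : (0:ℝ) < (Fintype.card (Fin K → Fin Ns → Fin Nh × Bool) : ℝ) := by
        exact_mod_cast Fintype.card_pos
      rw [div_le_iff₀ hc0]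
      calc ((Nat.card {ω : Fin K → Fin Ns → Fin Nh × Bool //
            min β (1 - Real.exp (-(Ns : ℝ) * β)) + ε <
              ((thMatrixNs ω).rank : ℝ) / ((Ns * Nh : ℕ) : ℝ)} : ℕ) : ℝ)
          ≤ (Fintype.card (Fin K → Fin Ns → Fin Nh × Bool) : ℝ)
              * (4 / (((Ns * Nh : ℕ) : ℝ) * ε^2)) := hfin
        _ = 4 / (((Ns * Nh : ℕ) : ℝ) * ε^2)
              * (Fintype.card (Fin K → Fin Ns → Fin Nh × Bool) : ℝ) := by ring
  · intro Nh ω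
    rcases Nat.eq_zero_or_pos Nh with h0 | hNh1
    · subst h0
      have hden : ((Ns * 0 : ℕ) : ℝ) = 0 := by norm_num
      have h1 : ((thMatrixNs ω).rank : ℝ) / ((Ns * 0 : ℕ) : ℝ) = 0 :=
        div_eq_zero_iff.mpr (Or.inr hden)
      have h2 : ((⌊β * ((Ns * 0 : ℕ) : ℝ)⌋₊ : ℕ) : ℝ) / ((Ns * 0 : ℕ) : ℝ) = 0 :=
        div_eq_zero_iff.mpr (Or.inr hden)
      rw [h1, h2]
      norm_num
    · have hN0 : (0:ℝ) < ((Ns * Nh : ℕ) : ℝ) := by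
        exact_mod_cast Nat.mul_pos hNs hNh1
      refine le_min ?_ ?_
      · rw [div_le_one hN0]
        have := (thMatrixNs ω).rank_le_card_height
        have hcard : Fintype.card (Fin Ns × Fin Nh) = Ns * Nh := by
          simp [Fintype.card_prod]
        rw [hcard] at this
        exact_mod_cast this
      · refine (div_le_div_iff_of_pos_right hN0).mpr ?_
        exact_mod_cast (thMatrixNs ω).rank_le_card_width.trans (Fintype.card_fin _).le
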